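/- For any function Ψ : 2^{<ω} → ω, there exists a partial function ξ from ω to 2 whose domain has infinite complement in ω, such that the tree T(ξ) = { Ψ*(t) : t ∈ 2^{<ω}, t compatible with ξ } is a binary tree, i.e., every node of T(ξ) has at most 2 immediate successors in T(ξ). -/

import Mathlib

/-- `P` is the map `Ψ*` defined by recursion from `Ψ`:
`Ψ*(⟨⟩) = ⟨⟩` and `Ψ*(t⌢⟨i⟩) = Ψ*(t)⌢⟨Ψ(t⌢⟨i⟩)⟩`. -/
def IsPsiStar (Ψ : List Bool → ℕ) (P : List Bool → List ℕ) : Prop :=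
  P [] = [] ∧ ∀ (t : List Bool) (i : Bool), P (t ++ [i]) = P t ++ [Ψ (t ++ [i])]

/-- `s ≡ t` : `Ψ(s⌢θ) = Ψ(t⌢θ)` for all finite binary sequences `θ`. -/
def Eqv (Ψ : List Bool → ℕ) (s t : List Bool) : Prop :=
  ∀ θ : List Bool, Ψ (s ++ θ) = Ψ (t ++ θ)

/-- `t` is compatible with the partial function `ξ : ω ⇀ 2`. -/
def Compat (ξ : ℕ → Option Bool) (t : List Bool) : Prop :=
  ∀ k < t.length, ∀ b, ξ k = some b → t[k]? = some b

/-- `W^ℓ(ξ)` for finite `ℓ`: compatible sequences of length `≤ ℓ`. -/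
def Wfin (ξ : ℕ → Option Bool) (ℓ : ℕ) : Set (List Bool) :=
  {t | t.length ≤ ℓ ∧ Compat ξ t}

/-- `W(ξ) = W^ω(ξ)`: all sequences compatible with `ξ`. -/
def Wall (ξ : ℕ → Option Bool) : Set (List Bool) :=
  {t | Compat ξ t}

/-- the set of minimal proper extensions of `η` in `T`. -/
def succT (T : Set (List ℕ)) (η : List ℕ) : Set (List ℕ) :=
  {ν | ν ∈ T ∧ η <+: ν ∧ η ≠ ν ∧ ∀ ρ ∈ T, η <+: ρ → ρ <+: ν → ρ = η ∨ ρ = ν}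

/-- a tree is binary if every node has at most 2 immediate successors. -/
def IsBinary (T : Set (List ℕ)) : Prop :=
  ∀ η ∈ T, (succT T η).Finite ∧ (succT T η).ncard ≤ 2

section Silver

variable {Ψ : List Bool → ℕ} {P : List Bool → List ℕ}

lemma P_len (hP : IsPsiStar Ψ P) (t : List Bool) : (P t).length = t.length := by
  induction t using List.reverseRecOn with
  | nil => simp [hP.1]
  | append_singleton t i ih => simp [hP.2, ih]

lemma P_prefix (hP : IsPsiStar Ψ P) {s t : List Bool} (h : s <+: t) : P s <+: P t := by
  obtain ⟨r, rfl⟩ := h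
  induction r using List.reverseRecOn with
  | nil => simp
  | append_singleton r i ih =>
    rw [← List.append_assoc, hP.2]
    exact ih.trans ⟨[Ψ (s ++ r ++ [i])], rfl⟩

lemma prefix_eq_of_len {α : Type*} {p q l : List α} (h1 : p <+: l) (h2 : q <+: l)
    (h : p.length = q.length) : p = q :=
  (List.prefix_of_prefix_length_le h1 h2 h.le).eq_of_length h

lemma Eqv_refl (s : List Bool) : Eqv Ψ s s := fun _ => rfl

lemma Eqv_symm {s t : List Bool} (h : Eqv Ψ s t) : Eqv Ψ t s := fun θ => (h θ).symm

lemma Eqv_trans {s t u : List Bool} (h1 : Eqv Ψ s t) (h2 : Eqv Ψ t u) : Eqv Ψ s u :=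
  fun θ => (h1 θ).trans (h2 θ)

lemma Eqv_append {s t : List Bool} (h : Eqv Ψ s t) (θ : List Bool) :
    Eqv Ψ (s ++ θ) (t ++ θ) := fun θ' => by
  simpa [List.append_assoc] using h (θ ++ θ')

lemma P_congr (hP : IsPsiStar Ψ P) {s t : List Bool} (h : Eqv Ψ s t) (hp : P s = P t)
    (θ : List Bool) : P (s ++ θ) = P (t ++ θ) := by
  induction θ using List.reverseRecOn with
  | nil => simpa
  | append_singleton θ i ih =>
    rw [← List.append_assoc, hP.2, ← List.append_assoc, hP.2, ih]
    have := h (θ ++ [i])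
    rw [← List.append_assoc, ← List.append_assoc] at this
    rw [this]

lemma Psi_eq_of_P_eq (hP : IsPsiStar Ψ P) {A B : List Bool} (hlen : A.length = B.length)
    (hne : A ≠ []) (h : P A = P B) : Ψ A = Ψ B := by
  obtain rfl | ⟨a, i, rfl⟩ := A.eq_nil_or_concat
  · exact absurd rfl hne
  · obtain rfl | ⟨b, j, rfl⟩ := B.eq_nil_or_concat
    · simp at hlen
    · simp only [List.concat_eq_append] at *
      rw [hP.2, hP.2] at h
      have hl : (P a).length = (P b).length := by
        rw [P_len hP, P_len hP]; simpa using hlen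
      have := (List.append_inj h hl).2
      simpa using this

lemma Compat_prefix {ξ : ℕ → Option Bool} {s t : List Bool} (h : s <+: t)
    (hc : Compat ξ t) : Compat ξ s := by
  intro k hk b hb
  have h2 := hc k (hk.trans_le h.length_le) b hb
  obtain ⟨r, rfl⟩ := h
  rwa [List.getElem?_append, if_pos hk] at h2

lemma Compat_congr {ξ ξ' : ℕ → Option Bool} {t : List Bool}
    (hag : ∀ k < t.length, ξ k = ξ' k) (hc : Compat ξ t) : Compat ξ' t :=
  fun k hk b hb => hc k hk b ((hag k hk) ▸ hb)

lemma Compat_get {ξ : ℕ → Option Bool} {t : List Bool} (hc : Compat ξ t) {k : ℕ}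
    (hk : k < t.length) {b : Bool} (hb : ξ k = some b) : t.getD k false = b := by
  have := hc k hk b hb
  rw [List.getElem?_eq_getElem hk] at this
  rw [List.getD_eq_getElem t false hk]
  exact Option.some.inj this

end Silver

def SilInv (Ψ : List Bool → ℕ) (P : List Bool → List ℕ) (m : ℕ) (ζ : ℕ → Option Bool) : Prop :=
  ∀ s t : List Bool, s.length = m → t.length = m → Compat ζ s → Compat ζ t →
    P s = P t → Eqv Ψ s t

def SilSep (Ψ : List Bool → ℕ) (P : List Bool → List ℕ) (b v : List Bool) : Prop :=
  P (b ++ false :: v) ≠ P (b ++ true :: v) ∨ Eqv Ψ (b ++ false :: v) (b ++ true :: v)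

section Silver2

variable {Ψ : List Bool → ℕ} {P : List Bool → List ℕ}

lemma SilSep_mono (hP : IsPsiStar Ψ P) {b v : List Bool} (h : SilSep Ψ P b v) (w : List Bool) :
    SilSep Ψ P b (v ++ w) := by
  rcases h with h | h
  · left
    intro he
    apply h
    have h1 : P (b ++ false :: v) <+: P (b ++ false :: (v ++ w)) :=
      P_prefix hP ⟨w, by simp⟩
    have h2 : P (b ++ true :: v) <+: P (b ++ true :: (v ++ w)) :=
      P_prefix hP ⟨w, by simp⟩
    rw [he] at h1
    exact prefix_eq_of_len h1 h2 (by simp [P_len hP])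
  · right
    have := Eqv_append h w
    simpa [List.append_assoc] using this

lemma SilSep_exists (hP : IsPsiStar Ψ P) (b u : List Bool) : ∃ v, u <+: v ∧ SilSep Ψ P b v := by
  by_cases h : ∀ θ, Ψ (b ++ false :: (u ++ θ)) = Ψ (b ++ true :: (u ++ θ))
  · refine ⟨u, List.prefix_refl u, Or.inr fun θ => ?_⟩
    simpa [List.append_assoc] using h θ
  · push_neg at h
    obtain ⟨θ, hθ⟩ := h
    refine ⟨u ++ θ, ⟨θ, rfl⟩, Or.inl fun he => hθ ?_⟩
    exact Psi_eq_of_P_eq hP (by simp) (by simp) he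

lemma SilSep_finite (hP : IsPsiStar Ψ P) (S : Set (List Bool)) (hS : S.Finite) :
    ∃ v, ∀ b ∈ S, SilSep Ψ P b v := by
  refine Set.Finite.induction_on (motive := fun S _ => ∃ v, ∀ b ∈ S, SilSep Ψ P b v) S hS ⟨[], by simp⟩ ?_
  intro a S' _ _ ih
  obtain ⟨v, hv⟩ := ih
  obtain ⟨v', hvv', hsep⟩ := SilSep_exists hP a v
  obtain ⟨w, rfl⟩ := hvv'
  refine ⟨v ++ w, fun b hb => ?_⟩
  rcases hb with rfl | hb
  · exact hsep
  · exact SilSep_mono hP (hv b hb) w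

lemma take_cons_drop {x : List Bool} {m : ℕ} (hm : m < x.length) :
    x = x.take m ++ x.getD m false :: x.drop (m + 1) := by
  conv_lhs => rw [← List.take_append_drop (m + 1) x]
  rw [List.take_succ, List.getElem?_eq_getElem hm, List.getD_eq_getElem x false hm]
  simp

lemma forced_suffix {ξ : ℕ → Option Bool} {x s : List Bool} (hx : Compat ξ x)
    (hs : Compat ξ s) (hlen : x.length = s.length) (m : ℕ)
    (hm : ∀ k, m < k → k < x.length → ∃ b, ξ k = some b) :
    x.drop (m + 1) = s.drop (m + 1) := by
  apply List.ext_getElem (by simp [hlen])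
  intro j h1 h2
  simp only [List.getElem_drop]
  have hjx : m + 1 + j < x.length := by
    have := h1; simp at this; omega
  obtain ⟨b, hb⟩ := hm (m + 1 + j) (by omega) hjx
  have e1 := hx (m + 1 + j) hjx b hb
  have e2 := hs (m + 1 + j) (by omega) b hb
  rw [List.getElem?_eq_getElem hjx] at e1
  rw [List.getElem?_eq_getElem (by omega : m + 1 + j < s.length)] at e2
  rw [Option.some.inj e1, Option.some.inj e2]

end Silver2

section Silver3

variable {Ψ : List Bool → ℕ} {P : List Bool → List ℕ}

lemma step_ex (hP : IsPsiStar Ψ P) (m : ℕ) (ζ : ℕ → Option Bool)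
    (hinv : SilInv Ψ P m ζ) :
    ∃ p : ℕ × (ℕ → Option Bool),
      m < p.1 ∧ (∀ k, k < m → p.2 k = ζ k) ∧ p.2 m = none ∧
      (∀ k, m < k → k < p.1 → ∃ b, p.2 k = some b) ∧
      (∀ k, p.1 ≤ k → p.2 k = none) ∧ SilInv Ψ P p.1 p.2 := by
  obtain ⟨v, hv⟩ := SilSep_finite hP {b : List Bool | b.length = m}
    (List.finite_length_eq _ _)
  set m' := m + 1 + v.length with hm'
  set ζ' : ℕ → Option Bool := fun k =>
    if k < m then ζ k else if m < k ∧ k < m' then some (v.getD (k - (m + 1)) false)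
    else none with hζ'
  have hbelow : ∀ k, k < m → ζ' k = ζ k := by intro k hk; simp [hζ', hk]
  have hfree : ζ' m = none := by simp [hζ']
  have hsome : ∀ k, m < k → k < m' → ζ' k = some (v.getD (k - (m + 1)) false) := by
    intro k h1 h2
    simp only [hζ']
    rw [if_neg (by omega), if_pos ⟨h1, h2⟩]
  refine ⟨(m', ζ'), by omega, hbelow, hfree, fun k h1 h2 => ⟨_, hsome k h1 h2⟩, ?_, ?_⟩
  · intro k hk
    simp only [hζ']
    rw [if_neg (by omega), if_neg (by omega)]
  · -- the invariant at m'
    intro s t hs ht hcs hct hpst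
    have key : ∀ u : List Bool, u.length = m' → Compat ζ' u → u.drop (m + 1) = v := by
      intro u hu hcu
      apply List.ext_getElem (by rw [List.length_drop, hu, hm']; omega)
      intro j h1 h2
      simp only [List.getElem_drop]
      have hb : ζ' (m + 1 + j) = some (v.getD j false) := by
        have e : m + 1 + j - (m + 1) = j := by omega
        rw [hsome (m + 1 + j) (by omega) (by omega), e]
      have := hcu (m + 1 + j) (by omega) _ hb
      rw [List.getElem?_eq_getElem (by omega : m + 1 + j < u.length)] at this
      rw [Option.some.inj this, List.getD_eq_getElem v false h2]
    have hcompat_take : ∀ u : List Bool, u.length = m' → Compat ζ' u → Compat ζ (u.take m) := by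
      intro u hu hcu
      have h1 : Compat ζ' (u.take m) := Compat_prefix (List.take_prefix m u) hcu
      apply Compat_congr ?_ h1
      intro k hk
      rw [List.length_take] at hk
      exact hbelow k (by omega)
    have hsd := key s hs hcs
    have htd := key t ht hct
    have hsdec : s = s.take m ++ s.getD m false :: v := by
      have h0 := take_cons_drop (show m < s.length by omega)
      rwa [hsd] at h0
    have htdec : t = t.take m ++ t.getD m false :: v := by
      have h0 := take_cons_drop (show m < t.length by omega)
      rwa [htd] at h0
    set a := s.take m
    set b := t.take m
    obtain ⟨i, hi⟩ : ∃ i, s.getD m false = i := ⟨_, rfl⟩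
    obtain ⟨j, hj⟩ : ∃ j, t.getD m false = j := ⟨_, rfl⟩
    rw [hi] at hsdec
    rw [hj] at htdec
    have hpa : P a <+: P s := P_prefix hP (List.take_prefix m s)
    have hpb : P b <+: P s := by
      rw [hpst]; exact P_prefix hP (List.take_prefix m t)
    have hPa : P a = P b :=
      prefix_eq_of_len hpa hpb (by simp [P_len hP, a, b, hs, ht])
    have hla : a.length = m := by simp [a, hs]; omega
    have hlb : b.length = m := by simp [b, ht]; omega
    have heq : Eqv Ψ a b := hinv a b hla hlb (hcompat_take s hs hcs) (hcompat_take t ht hct) hPa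
    have h1 : Eqv Ψ s (b ++ i :: v) := by
      rw [hsdec]; exact Eqv_append heq (i :: v)
    have h2 : P (b ++ i :: v) = P (b ++ j :: v) := by
      calc P (b ++ i :: v) = P (a ++ i :: v) := (P_congr hP heq hPa (i :: v)).symm
        _ = P s := by rw [← hsdec]
        _ = P t := hpst
        _ = P (b ++ j :: v) := by rw [← htdec]
    by_cases hij : i = j
    · rw [htdec, ← hij]; exact h1
    · have hbS : b ∈ {l : List Bool | l.length = m} := hlb
      have h3 : Eqv Ψ (b ++ i :: v) (b ++ j :: v) := by
        rcases hv b hbS with hne | heqv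
        · exfalso
          cases i <;> cases j
          · exact hij rfl
          · exact hne h2
          · exact hne h2.symm
          · exact hij rfl
        · cases i <;> cases j
          · exact Eqv_refl _
          · exact heqv
          · exact Eqv_symm heqv
          · exact Eqv_refl _
      rw [htdec]
      exact Eqv_trans h1 h3

end Silver3

section Silver4

variable {Ψ : List Bool → ℕ} {P : List Bool → List ℕ}

def SilState (Ψ : List Bool → ℕ) (P : List Bool → List ℕ) : Type :=
  {p : ℕ × (ℕ → Option Bool) // SilInv Ψ P p.1 p.2}

noncomputable def silNext (hP : IsPsiStar Ψ P) (p : SilState Ψ P) : SilState Ψ P :=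
  ⟨(step_ex hP p.1.1 p.1.2 p.2).choose, (step_ex hP p.1.1 p.1.2 p.2).choose_spec.2.2.2.2.2⟩

lemma silNext_spec (hP : IsPsiStar Ψ P) (p : SilState Ψ P) :
    p.1.1 < (silNext hP p).1.1 ∧
    (∀ k, k < p.1.1 → (silNext hP p).1.2 k = p.1.2 k) ∧
    (silNext hP p).1.2 p.1.1 = none ∧
    (∀ k, p.1.1 < k → k < (silNext hP p).1.1 → ∃ b, (silNext hP p).1.2 k = some b) := by
  have h := (step_ex hP p.1.1 p.1.2 p.2).choose_spec
  exact ⟨h.1, h.2.1, h.2.2.1, h.2.2.2.1⟩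

def silZero : SilState Ψ P := by
  refine ⟨(0, fun _ => none), fun s t hs ht _ _ _ => ?_⟩
  have hs' : s = [] := List.length_eq_zero_iff.mp hs
  have ht' : t = [] := List.length_eq_zero_iff.mp ht
  subst hs'; subst ht'
  exact Eqv_refl _

noncomputable def silSeq (hP : IsPsiStar Ψ P) : ℕ → SilState Ψ P
  | 0 => silZero
  | n + 1 => silNext hP (silSeq hP n)

end Silver4


theorem silver_main (Ψ : List Bool → ℕ) (P : List Bool → List ℕ) (hP : IsPsiStar Ψ P) :
    ∃ ξ : ℕ → Option Bool, {k : ℕ | ξ k = none}.Infinite ∧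
      IsBinary (P '' Wall ξ) := by
  classical
  set m : ℕ → ℕ := fun n => (silSeq hP n).1.1 with hm
  set ζ : ℕ → ℕ → Option Bool := fun n => (silSeq hP n).1.2 with hζ
  have hspec : ∀ n, m n < m (n + 1) ∧ (∀ k, k < m n → ζ (n + 1) k = ζ n k) ∧
      ζ (n + 1) (m n) = none ∧
      (∀ k, m n < k → k < m (n + 1) → ∃ b, ζ (n + 1) k = some b) :=
    fun n => silNext_spec hP (silSeq hP n)
  have hmono : StrictMono m := strictMono_nat_of_lt_succ fun n => (hspec n).1
  have hm0 : m 0 = 0 := rfl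
  have hagree : ∀ n n' k, n ≤ n' → k < m n → ζ n' k = ζ n k := by
    intro n n' k h
    induction n', h using Nat.le_induction with
    | base => intro _; rfl
    | succ n' hnn' ih =>
      intro hk
      rw [(hspec n').2.1 k (lt_of_lt_of_le hk (hmono.monotone hnn')), ih hk]
  set ξ : ℕ → Option Bool := fun k => ζ (k + 1) k with hξ
  have hξeq : ∀ n k, k < m n → ξ k = ζ n k := by
    intro n k hk
    rcases le_total n (k + 1) with h | h
    · exact hagree n (k + 1) k h hk
    · exact (hagree (k + 1) n k h (lt_of_lt_of_le (Nat.lt_succ_self k) hmono.le_apply)).symm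
  have hfree : ∀ n, ξ (m n) = none := by
    intro n
    rw [hξeq (n + 1) (m n) ((hspec n).1)]
    exact (hspec n).2.2.1
  have hinf : {k | ξ k = none}.Infinite :=
    Set.infinite_of_injective_forall_mem (f := m) hmono.injective hfree
  have hinv : ∀ n s t, s.length = m n → t.length = m n → Compat ξ s → Compat ξ t →
      P s = P t → Eqv Ψ s t := by
    intro n s t hs ht hcs hct hpst
    have conv : ∀ u : List Bool, u.length = m n → Compat ξ u → Compat (ζ n) u := by
      intro u hu hcu
      apply Compat_congr ?_ hcu
      intro k hk
      exact hξeq n k (hu ▸ hk)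
    exact (silSeq hP n).2 s t hs ht (conv s hs hcs) (conv t ht hct) hpst
  have hlocate : ∀ ℓ, (∀ n, m n ≠ ℓ) → ∃ n, m n < ℓ ∧ ℓ < m (n + 1) := by
    intro ℓ hne
    have hex : ∃ n, ℓ < m n := ⟨ℓ + 1, lt_of_lt_of_le (Nat.lt_succ_self ℓ) hmono.le_apply⟩
    rcases hN' : Nat.find hex with _ | n
    · exfalso
      have h0 := Nat.find_spec hex
      rw [hN'] at h0
      rw [hm0] at h0
      omega
    · have h1 := Nat.find_spec hex
      rw [hN'] at h1
      have h2 : ¬ ℓ < m n := Nat.find_min hex (by omega)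
      exact ⟨n, lt_of_le_of_ne (not_lt.mp h2) (hne n), h1⟩
  have hdet : ∀ k, (∀ n, m n ≠ k) → ∃ b, ξ k = some b := by
    intro k hk
    obtain ⟨n, h1, h2⟩ := hlocate k hk
    obtain ⟨b, hb⟩ := (hspec n).2.2.2 k h1 h2
    exact ⟨b, by rw [hξeq (n + 1) k h2]; exact hb⟩
  have hval : ∀ s : List Bool, Compat ξ s → ∃ y0 y1 : ℕ,
      ∀ (x : List Bool) (i : Bool), Compat ξ x → x.length = s.length → P x = P s →
        Compat ξ (x ++ [i]) → Ψ (x ++ [i]) = y0 ∨ Ψ (x ++ [i]) = y1 := by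
    intro s hcs
    by_cases hc : ∃ n, m n = s.length
    · obtain ⟨n, hn⟩ := hc
      refine ⟨Ψ (s ++ [false]), Ψ (s ++ [true]), fun x i hcx hlx hpx _ => ?_⟩
      have heq : Eqv Ψ x s := hinv n x s (by omega) hn.symm hcx hcs hpx
      have h0 := heq [i]
      cases i
      · left; rw [h0]
      · right; rw [h0]
    · push_neg at hc
      obtain ⟨n, h1, h2⟩ := hlocate s.length hc
      obtain ⟨c, hcℓ⟩ := hdet s.length hc
      refine ⟨Ψ (s.take (m n) ++ false :: (s.drop (m n + 1) ++ [c])),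
             Ψ (s.take (m n) ++ true :: (s.drop (m n + 1) ++ [c])),
             fun x i hcx hlx hpx hcxi => ?_⟩
      have hic : i = c := by
        have hx := hcxi s.length (by simp [hlx]) c hcℓ
        rw [← hlx, List.getElem?_concat_length] at hx
        exact Option.some.inj hx
      have hforce : ∀ k, m n < k → k < x.length → ∃ b, ξ k = some b := by
        intro k hk1 hk2
        apply hdet
        intro n'
        rcases le_or_gt n' n with h | h
        · have := hmono.monotone h
          omega
        · have := hmono.monotone (show n + 1 ≤ n' by omega)
          omega
      have hdrop : x.drop (m n + 1) = s.drop (m n + 1) :=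
        forced_suffix hcx hcs hlx (m n) hforce
      have hpsx : P (s.take (m n)) <+: P x := by
        rw [hpx]
        exact P_prefix hP (List.take_prefix _ s)
      have htk : P (x.take (m n)) = P (s.take (m n)) :=
        prefix_eq_of_len (P_prefix hP (List.take_prefix _ x)) hpsx
          (by rw [P_len hP, P_len hP, List.length_take, List.length_take, hlx])
      have heq : Eqv Ψ (x.take (m n)) (s.take (m n)) :=
        hinv n _ _ (by rw [List.length_take]; omega) (by rw [List.length_take]; omega)
          (Compat_prefix (List.take_prefix _ _) hcx)
          (Compat_prefix (List.take_prefix _ _) hcs) htk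
      have hxd : x ++ [i] =
          x.take (m n) ++ (x.getD (m n) false :: (s.drop (m n + 1) ++ [c])) := by
        conv_lhs => rw [take_cons_drop (show m n < x.length by omega)]
        rw [hdrop, hic]
        simp
      rw [hxd]
      have h0 := heq (x.getD (m n) false :: (s.drop (m n + 1) ++ [c]))
      rw [h0]
      cases x.getD (m n) false
      · left; rfl
      · right; rfl
  refine ⟨ξ, hinf, ?_⟩
  rintro η ⟨s, hcs, rfl⟩
  obtain ⟨y0, y1, hy⟩ := hval s hcs
  have hsub : succT (P '' Wall ξ) (P s) ⊆ {P s ++ [y0], P s ++ [y1]} := by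
    rintro ν ⟨⟨w, hcw, rfl⟩, hpre, hne, hmin⟩
    have hlν : s.length < w.length := by
      have hle := hpre.length_le
      rw [P_len hP, P_len hP] at hle
      rcases lt_or_eq_of_le hle with h | h
      · exact h
      · exact absurd (hpre.eq_of_length (by rw [P_len hP, P_len hP, h])) hne
    set ℓ := s.length with hℓ
    have hρT : P (w.take (ℓ + 1)) ∈ P '' Wall ξ :=
      ⟨w.take (ℓ + 1), Compat_prefix (List.take_prefix _ w) hcw, rfl⟩
    have hρν : P (w.take (ℓ + 1)) <+: P w := P_prefix hP (List.take_prefix _ w)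
    have hηρ : P s <+: P (w.take (ℓ + 1)) :=
      List.prefix_of_prefix_length_le hpre hρν
        (by rw [P_len hP, P_len hP, List.length_take]; omega)
    rcases hmin _ hρT hηρ hρν with h | h
    · exfalso
      have hh := congrArg List.length h
      rw [P_len hP, P_len hP, List.length_take] at hh
      omega
    · have hdecomp : w.take (ℓ + 1) = w.take ℓ ++ [w.getD ℓ false] := by
        rw [List.take_succ, List.getElem?_eq_getElem (show ℓ < w.length by omega),
          List.getD_eq_getElem w false (by omega)]
        simp
      have hcx : Compat ξ (w.take ℓ) := Compat_prefix (List.take_prefix _ w) hcw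
      have hcxi : Compat ξ (w.take ℓ ++ [w.getD ℓ false]) := by
        rw [← hdecomp]
        exact Compat_prefix (List.take_prefix _ w) hcw
      have hlx : (w.take ℓ).length = s.length := by rw [List.length_take]; omega
      have hpx : P (w.take ℓ) = P s :=
        prefix_eq_of_len (P_prefix hP (List.take_prefix _ w)) hpre
          (by rw [P_len hP, P_len hP]; exact hlx)
      have hν : P w = P s ++ [Ψ (w.take ℓ ++ [w.getD ℓ false])] := by
        rw [← h, hdecomp, hP.2, hpx]
      rcases hy (w.take ℓ) (w.getD ℓ false) hcx hlx hpx hcxi with hv0 | hv0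
      · left; rw [hν, hv0]
      · right; rw [hν, hv0]; exact rfl
  constructor
  · exact ((Set.finite_singleton _).insert _).subset hsub
  · have h2 : ({P s ++ [y0], P s ++ [y1]} : Set (List ℕ)).ncard ≤ 2 := by
      have h3 := Set.ncard_insert_le (P s ++ [y0]) ({P s ++ [y1]} : Set (List ℕ))
      simpa using h3
    exact le_trans (Set.ncard_le_ncard hsub ((Set.finite_singleton _).insert _)) h2
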